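/- arXiv:1902.07162 — 5 statements merged into one kernel-verified Lean document; each statement's English description precedes it below -/
import Mathlib

section
/- For all natural numbers n, m and all a, b, c, λ in [0,1]: min(a, b ⊕ n·(c ⊙ λ)) ≤ max(a ⊙ (c ⊕ λ)^m, b), where x ⊕ y = min(x+y,1), x ⊙ y = max(x+y-1,0), n·x denotes the n-fold ⊕-sum of x, and y^m denotes the m-fold ⊙-product of y. -/
open Set

noncomputable def oplus (a b : ℝ) : ℝ := min (a + b) 1

noncomputable def odot (a b : ℝ) : ℝ := max (a + b - 1) 0

/-- `n`-fold truncated sum `x ⊕ ⋯ ⊕ x` (`0` when `n = 0`). -/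
noncomputable def nOplus : ℕ → ℝ → ℝ
  | 0, _ => 0
  | n + 1, x => oplus x (nOplus n x)

/-- `m`-fold truncated product `y ⊙ ⋯ ⊙ y` (`1` when `m = 0`). -/
noncomputable def nOdot : ℕ → ℝ → ℝ
  | 0, _ => 1
  | m + 1, y => odot y (nOdot m y)

lemma nOplus_zero (n : ℕ) : nOplus n 0 = 0 := by
  induction n with
  | zero => rfl
  | succ n ih => simp [nOplus, oplus, ih]

lemma nOdot_one (m : ℕ) : nOdot m 1 = 1 := by
  induction m with
  | zero => rfl
  | succ m ih => simp [nOdot, odot, ih]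

theorem min_oplus_le_max_odot (n m : ℕ) (a b c l : ℝ)
    (ha : a ∈ Icc (0:ℝ) 1) (hb : b ∈ Icc (0:ℝ) 1) (hc : c ∈ Icc (0:ℝ) 1)
    (hl : l ∈ Icc (0:ℝ) 1) :
    min a (oplus b (nOplus n (odot c l))) ≤ max (odot a (nOdot m (oplus c l))) b := by
  rcases le_or_gt 1 (c + l) with h | h
  · have h1 : oplus c l = 1 := by simp [oplus, min_eq_right h]
    rw [h1, nOdot_one]
    have : odot a 1 = a := by simp [odot, ha.1]
    rw [this]
    exact le_max_of_le_left (min_le_left _ _)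
  · have h0 : odot c l = 0 := by
      simp [odot, max_eq_right (by linarith : c + l - 1 ≤ 0)]
    rw [h0, nOplus_zero]
    have : oplus b 0 = b := by simp [oplus, hb.2]
    rw [this]
    exact le_max_of_le_right (min_le_right _ _)
end

section
/- With ρ_n defined by ρ_0(x_0) = x_0 and ρ_{n+1}(x_0,…,x_{n+1}) = min(max(x_0,…,x_{n+1}), min(ρ_n(x_0,…,x_n) + 1/2^n, 1)): if (x_n) is a sequence in [0,1] satisfying x_n ≤ x_{n+1} ≤ min(x_n + 1/2^n, 1) for all n (an HNN-Cauchy sequence), then ρ_n(x_0,…,x_n) = x_n for every n. -/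
open Set

noncomputable def pmax : ℕ → (ℕ → ℝ) → ℝ
  | 0, x => x 0
  | n + 1, x => max (pmax n x) (x (n + 1))

noncomputable def rho : ℕ → (ℕ → ℝ) → ℝ
  | 0, x => x 0
  | n + 1, x => min (pmax (n + 1) x) (min (rho n x + (1 / 2) ^ n) 1)

theorem rho_of_hnn_cauchy (x : ℕ → ℝ) (hx : ∀ n, x n ∈ Icc (0:ℝ) 1)
    (hHNN : ∀ n, x n ≤ x (n + 1) ∧ x (n + 1) ≤ min (x n + (1 / 2) ^ n) 1) :
    ∀ n, rho n x = x n := by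
  have hpmax : ∀ n, pmax n x = x n := by
    intro n
    induction n with
    | zero => rfl
    | succ n ih =>
      simp [pmax, ih, max_eq_right (hHNN n).1]
  intro n
  induction n with
  | zero => rfl
  | succ n ih =>
    have h2 := (hHNN n).2
    simp only [rho, hpmax, ih]
    rw [min_eq_left]
    exact le_min (le_min_iff.mp h2).1 (hx (n+1)).2
end

section
/- Define δ : [0,1]^ℕ → [0,1] by δ((x_n)) := lim_{n→∞} ρ_n(x_0,…,x_n), where ρ_0(x_0) = x_0 and ρ_{n+1}(x_0,…,x_{n+1}) = min(max(x_0,…,x_{n+1}), min(ρ_n(x_0,…,x_n) + 1/2^n, 1)). This limit exists for every sequence, δ is monotone (with respect to the pointwise order on [0,1]^ℕ) and continuous (with respect to the product topology), and satisfies δ(x,x,x,…) = x as well as ρ_n(x_0,…,x_n) ≤ δ((x_k)) ≤ min(ρ_n(x_0,…,x_n) + 1/2^{n-1}, 1) for every n. -/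
open Set Filter

/-- `δ((x_n)) = lim_n ρ_n(x_0,…,x_n)`; since the sequence `(ρ_n x)_n` is increasing and
bounded, its limit equals its supremum. -/
noncomputable def delta (x : ℕ → ℝ) : ℝ := ⨆ n, rho n x

lemma continuous_pmax : ∀ n, Continuous (pmax n)
  | 0 => continuous_apply 0
  | n + 1 => (continuous_pmax n).max (continuous_apply (n + 1))

lemma continuous_rho : ∀ n, Continuous (rho n)
  | 0 => continuous_apply 0
  | n + 1 => (continuous_pmax (n + 1)).min
      (((continuous_rho n).add continuous_const).min continuous_const)

lemma rho_le_pmax (x : ℕ → ℝ) : ∀ n, rho n x ≤ pmax n x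
  | 0 => le_refl _
  | n + 1 => min_le_left _ _

lemma rho_le_one (x : ℕ → ℝ) (hx : x 0 ≤ 1) : ∀ n, rho n x ≤ 1
  | 0 => hx
  | n + 1 => le_trans (min_le_right _ _) (min_le_right _ _)

lemma pmax_mono_n (x : ℕ → ℝ) : Monotone (fun n => pmax n x) :=
  monotone_nat_of_le_succ fun n => le_max_left _ _

lemma rho_mono_n (x : ℕ → ℝ) (hx : x 0 ≤ 1) : Monotone (fun n => rho n x) := by
  apply monotone_nat_of_le_succ
  intro n
  refine le_min (le_trans (rho_le_pmax x n) (pmax_mono_n x (Nat.le_succ n)))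
    (le_min ?_ (rho_le_one x hx n))
  have : (0:ℝ) < (1/2)^n := by positivity
  linarith

lemma rho_succ_le (x : ℕ → ℝ) (n : ℕ) : rho (n + 1) x ≤ rho n x + (1/2)^n :=
  le_trans (min_le_right _ _) (min_le_left _ _)

lemma rho_add_le (x : ℕ → ℝ) (n : ℕ) :
    ∀ k, rho (n + k) x ≤ rho n x + 2 * (1/2)^n - 2 * (1/2:ℝ)^(n + k)
  | 0 => by simp
  | k + 1 => by
    have h1 := rho_succ_le x (n + k)
    have h2 := rho_add_le x n k
    rw [show n + (k + 1) = (n + k) + 1 from rfl]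
    have hp : ((1:ℝ)/2)^(n + k + 1) = (1/2)^(n+k) * (1/2) := pow_succ _ _
    linarith

lemma pmax_mono_x (n : ℕ) {x y : ℕ → ℝ} (h : ∀ m, x m ≤ y m) : pmax n x ≤ pmax n y := by
  induction n with
  | zero => exact h 0
  | succ n ih => exact max_le_max ih (h (n + 1))

lemma rho_mono_x (n : ℕ) {x y : ℕ → ℝ} (h : ∀ m, x m ≤ y m) : rho n x ≤ rho n y := by
  induction n with
  | zero => exact h 0
  | succ n ih =>
    exact min_le_min (pmax_mono_x (n + 1) h) (min_le_min (by linarith) le_rfl)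

lemma rho_bdd (x : ℕ → ℝ) (hx : x 0 ≤ 1) : BddAbove (Set.range fun n => rho n x) := by
  refine ⟨1, ?_⟩
  rintro _ ⟨n, rfl⟩
  exact rho_le_one x hx n

lemma rho_le_delta (x : ℕ → ℝ) (hx : x 0 ≤ 1) (n : ℕ) : rho n x ≤ delta x :=
  le_ciSup (rho_bdd x hx) n

lemma delta_le_one (x : ℕ → ℝ) (hx : x 0 ≤ 1) : delta x ≤ 1 :=
  ciSup_le (rho_le_one x hx)

lemma delta_le_rho (x : ℕ → ℝ) (hx : x 0 ≤ 1) (n : ℕ) :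
    delta x ≤ rho n x + 2 * (1/2)^n := by
  apply ciSup_le
  intro m
  calc rho m x ≤ rho (n + m) x := rho_mono_n x hx (Nat.le_add_left m n)
    _ ≤ rho n x + 2 * (1/2)^n - 2 * (1/2:ℝ)^(n + m) := rho_add_le x n m
    _ ≤ rho n x + 2 * (1/2)^n := by
        have : (0:ℝ) < (1/2)^(n+m) := by positivity
        linarith

lemma tendsto_rho (x : ℕ → ℝ) (hx : x 0 ≤ 1) :
    Tendsto (fun n => rho n x) atTop (nhds (delta x)) :=
  tendsto_atTop_ciSup (rho_mono_n x hx) (rho_bdd x hx)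

theorem delta_properties :
    (∀ x : ℕ → ℝ, (∀ n, x n ∈ Icc (0:ℝ) 1) →
      Tendsto (fun n => rho n x) atTop (nhds (delta x))) ∧
    (∀ x y : ℕ → ℝ, (∀ n, x n ∈ Icc (0:ℝ) 1) → (∀ n, y n ∈ Icc (0:ℝ) 1) →
      (∀ n, x n ≤ y n) → delta x ≤ delta y) ∧
    ContinuousOn delta {x : ℕ → ℝ | ∀ n, x n ∈ Icc (0:ℝ) 1} ∧
    (∀ c ∈ Icc (0:ℝ) 1, delta (fun _ => c) = c) ∧
    (∀ x : ℕ → ℝ, (∀ n, x n ∈ Icc (0:ℝ) 1) → ∀ n,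
      rho n x ≤ delta x ∧ delta x ≤ min (rho n x + 2 * (1 / 2) ^ n) 1) := by

  refine ⟨?_, ?_, ?_, ?_, ?_⟩
  · intro x hx
    exact tendsto_rho x (hx 0).2
  · intro x y hx hy hxy
    exact ciSup_le fun n => le_trans (rho_mono_x n hxy) (rho_le_delta y (hy 0).2 n)
  · have hTU : TendstoUniformlyOn (fun n x => rho n x) delta atTop {x : ℕ → ℝ | ∀ n, x n ∈ Icc (0:ℝ) 1} := by
      rw [Metric.tendstoUniformlyOn_iff]
      intro ε hε
      have h2 : Tendsto (fun n : ℕ => 2 * ((1:ℝ)/2)^n) atTop (nhds 0) := by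
        simpa using (tendsto_pow_atTop_nhds_zero_of_lt_one (by norm_num : (0:ℝ) ≤ 1/2) (by norm_num)).const_mul 2
      filter_upwards [h2.eventually (gt_mem_nhds hε)] with n hn x hx
      have h1 := rho_le_delta x (hx 0).2 n
      have h3 := delta_le_rho x (hx 0).2 n
      rw [Real.dist_eq, abs_of_nonneg (by linarith)]
      linarith
    exact hTU.continuousOn (Filter.Frequently.of_forall fun n => (continuous_rho n).continuousOn)
  · intro c hc
    have hp : ∀ n, pmax n (fun _ => c) = c := by
      intro n; induction n with
      | zero => rfl
      | succ n ih => simp [pmax, ih]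
    have hr : ∀ n, rho n (fun _ => c) = c := by
      intro n; induction n with
      | zero => rfl
      | succ n ih =>
        simp only [rho, hp, ih]
        have : (0:ℝ) < (1/2)^n := by positivity
        rw [min_eq_left (le_min (by linarith) hc.2)]
    simp only [delta, hr, ciSup_const]
  · intro x hx n
    exact ⟨rho_le_delta x (hx 0).2 n,
      le_min (delta_le_rho x (hx 0).2 n) (delta_le_one x (hx 0).2)⟩
end

section
/- With δ : [0,1]^ℕ → [0,1] as the limit δ((x_n)) = lim_n ρ_n(x_0,…,x_n) of the recursively defined ρ_n: for every x ∈ [0,1], δ(max(x − 1/2^0, 0), max(x − 1/2^1, 0), max(x − 1/2^2, 0), …) = x. -/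
open Set

lemma pmax_trunc (x : ℝ) (n : ℕ) :
    pmax n (fun n => max (x - (1 / 2) ^ n) 0) = max (x - (1 / 2) ^ n) 0 := by
  induction n with
  | zero => rfl
  | succ n ih =>
      rw [pmax, ih, max_eq_right]
      have : ((1:ℝ)/2) ^ (n+1) ≤ (1/2) ^ n := by
        apply pow_le_pow_of_le_one <;> norm_num
      exact max_le_max (by linarith) le_rfl

lemma rho_trunc (x : ℝ) (hx : x ∈ Icc (0:ℝ) 1) (n : ℕ) :
    rho n (fun n => max (x - (1 / 2) ^ n) 0) = max (x - (1 / 2) ^ n) 0 := by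
  obtain ⟨h0, h1⟩ := hx
  induction n with
  | zero => rfl
  | succ n ih =>
      rw [rho, ih, pmax_trunc]
      have hp : (0:ℝ) < ((1:ℝ)/2) ^ n := by positivity
      have hp1 : (0:ℝ) < ((1:ℝ)/2) ^ (n+1) := by positivity
      have hAB : max (x - (1/2)^(n+1)) 0 ≤ max (x - (1/2)^n) 0 + (1/2)^n := by
        apply max_le
        · calc x - (1/2)^(n+1) ≤ (x - (1/2)^n) + (1/2)^n := by linarith
            _ ≤ max (x - (1/2)^n) 0 + (1/2)^n := by
                gcongr; exact le_max_left _ _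
        · have := le_max_right (x - ((1:ℝ)/2)^n) (0:ℝ)
          linarith
      have hA1 : max (x - (1/2)^(n+1)) 0 ≤ 1 := max_le (by linarith) (by norm_num)
      rw [min_eq_left (le_min hAB hA1)]

theorem delta_truncated_sub (x : ℝ) (hx : x ∈ Icc (0:ℝ) 1) :
    delta (fun n => max (x - (1 / 2) ^ n) 0) = x := by
  obtain ⟨h0, h1⟩ := hx
  unfold delta
  simp only [rho_trunc x ⟨h0, h1⟩]
  have hmono : Monotone (fun n : ℕ => max (x - (1 / 2) ^ n) 0) := by
    intro a b hab
    have : ((1:ℝ)/2) ^ b ≤ (1/2) ^ a := by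
      exact pow_le_pow_of_le_one (by norm_num) (by norm_num) hab
    exact max_le_max (by linarith) le_rfl
  have hbdd : BddAbove (range fun n : ℕ => max (x - (1 / 2) ^ n) 0) := by
    refine ⟨1, ?_⟩
    rintro y ⟨n, rfl⟩
    have : ((1:ℝ)/2) ^ n ≥ 0 := by positivity
    apply max_le <;> linarith
  have htendsto : Filter.Tendsto (fun n : ℕ => max (x - (1 / 2) ^ n) 0)
      Filter.atTop (nhds x) := by
    have h2 : Filter.Tendsto (fun n : ℕ => ((1:ℝ)/2) ^ n) Filter.atTop (nhds 0) := by
      apply tendsto_pow_atTop_nhds_zero_of_lt_one <;> norm_num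
    have h3 : Filter.Tendsto (fun n : ℕ => x - ((1:ℝ)/2) ^ n) Filter.atTop (nhds x) := by
      simpa using Filter.Tendsto.const_sub x h2
    have := h3.max (tendsto_const_nhds (x := (0:ℝ)) (f := Filter.atTop (α := ℕ)))
    simpa [max_eq_left h0] using this
  exact tendsto_nhds_unique (tendsto_atTop_ciSup hmono hbdd) htendsto
end

section
/- Let X be a compact topological space equipped with a preorder, and let L be a set of monotone continuous functions X → [0,1] closed under pointwise max, min, truncated addition ⊕, truncated product ⊙, and containing all constants, such that whenever x ≱ y there exists φ ∈ L with φ(x) < φ(y). Then L is dense in the set of all monotone continuous functions X → [0,1] with respect to the sup metric: for every monotone continuous ψ : X → [0,1] and every ε > 0 there exists φ ∈ L with sup_{x∈X} |ψ(x) − φ(x)| ≤ ε. -/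
open Set

/-- Ordered Stone–Weierstrass theorem. -/
theorem ordered_stone_weierstrass {X : Type*} [TopologicalSpace X] [Preorder X]
    [CompactSpace X] (L : Set (X → ℝ))
    (hmono : ∀ f ∈ L, Monotone f)
    (hcont : ∀ f ∈ L, Continuous f)
    (hrange : ∀ f ∈ L, ∀ x, f x ∈ Icc (0:ℝ) 1)
    (hmax : ∀ f ∈ L, ∀ g ∈ L, (fun x => max (f x) (g x)) ∈ L)
    (hmin : ∀ f ∈ L, ∀ g ∈ L, (fun x => min (f x) (g x)) ∈ L)
    (hoplus : ∀ f ∈ L, ∀ g ∈ L, (fun x => oplus (f x) (g x)) ∈ L)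
    (hodot : ∀ f ∈ L, ∀ g ∈ L, (fun x => odot (f x) (g x)) ∈ L)
    (hconst : ∀ c ∈ Icc (0:ℝ) 1, (fun _ : X => c) ∈ L)
    (hsep : ∀ x y : X, ¬ y ≤ x → ∃ φ ∈ L, φ x < φ y) :
    ∀ ψ : X → ℝ, Monotone ψ → Continuous ψ → (∀ x, ψ x ∈ Icc (0:ℝ) 1) →
      ∀ ε > (0:ℝ), ∃ φ ∈ L, ∀ x, |ψ x - φ x| ≤ ε := by
  intro ψ hψm hψc hψr ε hε
  classical
  rcases isEmpty_or_nonempty X with hX | hX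
  · exact ⟨fun _ => 0, hconst 0 ⟨le_refl _, zero_le_one⟩, fun x => (IsEmpty.false x).elim⟩
  -- Step 1: indicator functions
  have hindic : ∀ x y : X, ¬ y ≤ x → ∃ χ ∈ L, χ x = 0 ∧ χ y = 1 := by
    intro x y hxy
    obtain ⟨φ, hφL, hφlt⟩ := hsep x y hxy
    clear hxy
    have hax := hrange φ hφL x
    have hay := hrange φ hφL y
    set a := φ x with ha
    have h1a : (1 - a) ∈ Icc (0:ℝ) 1 := ⟨by linarith only [hax.2], by linarith only [hax.1]⟩
    set φ' : X → ℝ := fun z => odot (φ z) (1 - a) with hφ'def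
    have hφ'L : φ' ∈ L := hodot φ hφL _ (hconst _ h1a)
    set δ : ℝ := φ y - a with hδ
    have hδpos : 0 < δ := by simp only [hδ]; linarith only [hφlt]
    have hφ'x : φ' x = 0 := by
      simp only [hφ'def, odot, ← ha]
      rw [max_eq_right (by linarith only [] : a + (1 - a) - 1 ≤ 0)]
    have hφ'y : φ' y = δ := by
      simp only [hφ'def, odot]
      rw [max_eq_left (by linarith only [hφlt] : (0:ℝ) ≤ φ y + (1 - a) - 1)]
      simp only [hδ]; ring
    -- doubling operator
    set D : (X → ℝ) → (X → ℝ) := fun f z => oplus (f z) (f z) with hD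
    have hiter : ∀ n : ℕ, (D^[n] φ') ∈ L ∧ (D^[n] φ') x = 0 ∧
        (D^[n] φ') y = min ((2:ℝ)^n * δ) 1 := by
      intro n
      induction n with
      | zero =>
        refine ⟨hφ'L, hφ'x, ?_⟩
        simp only [Function.iterate_zero_apply, pow_zero, one_mul]
        rw [hφ'y, min_eq_left (by linarith only [hδ, hay.2, hax.1] : δ ≤ 1)]
      | succ n ih =>
        obtain ⟨hL', hx', hy'⟩ := ih
        rw [Function.iterate_succ_apply']
        refine ⟨hoplus _ hL' _ hL', ?_, ?_⟩
        · show oplus ((D^[n] φ') x) ((D^[n] φ') x) = 0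
          rw [hx']; simp [oplus]
        · show oplus ((D^[n] φ') y) ((D^[n] φ') y) = min ((2:ℝ)^(n+1) * δ) 1
          rw [hy']
          simp only [oplus]
          rcases le_or_gt ((2:ℝ)^n * δ) 1 with h | h
          · rw [min_eq_left h]
            congr 1
            ring_nf
          · rw [min_eq_right (le_of_lt h)]
            have h2 : (1:ℝ) ≤ (2:ℝ)^(n+1) * δ := by
              have he : (2:ℝ)^(n+1) * δ = 2 * ((2:ℝ)^n * δ) := by ring
              linarith only [h, he]
            rw [min_eq_right h2, min_eq_right (by norm_num : (1:ℝ) ≤ 1 + 1)]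
    obtain ⟨n, hn⟩ := exists_nat_gt (1 / δ)
    have h2n : (1:ℝ) ≤ (2:ℝ)^n * δ := by
      have hn2 : (n:ℝ) ≤ (2:ℝ)^n := by
        calc (n:ℝ) ≤ ((2^n : ℕ) : ℝ) := by exact_mod_cast (Nat.lt_two_pow_self (n := n)).le
        _ = (2:ℝ)^n := by push_cast; ring
      have : 1 / δ < (2:ℝ)^n := lt_of_lt_of_le hn hn2
      rw [div_lt_iff₀ hδpos] at this
      nlinarith [this]
    obtain ⟨hL', hx', hy'⟩ := hiter n
    exact ⟨D^[n] φ', hL', hx', by rw [hy', min_eq_right h2n]⟩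
  -- Step 2: two-point interpolation
  have hkey : ∀ x y : X, ∃ g ∈ L, g x ≤ ψ x ∧ ψ y ≤ g y := by
    intro x y
    by_cases h : ψ y ≤ ψ x
    · exact ⟨fun _ => ψ y, hconst _ (hψr y), h, le_refl _⟩
    · push_neg at h
      have hxy : ¬ y ≤ x := fun hle => absurd (hψm hle) (not_le.mpr h)
      obtain ⟨χ, hχL, hχx, hχy⟩ := hindic x y hxy
      have hc := hψr x
      have hd := hψr y
      refine ⟨fun z => min (ψ y) (oplus (ψ x) (χ z)), ?_, ?_, ?_⟩
      · exact hmin _ (hconst _ hd) _ (hoplus _ (hconst _ hc) _ hχL)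
      · simp only [hχx, oplus, add_zero]
        rw [min_eq_left hc.2]
        exact min_le_right _ _
      · simp only [hχy, oplus]
        rw [min_eq_right (by linarith only [hc.1] : (1:ℝ) ≤ ψ x + 1), min_eq_left hd.2]
  -- Step 3a: for each x, a function below ψ at x and above ψ - ε everywhere
  have hstep1 : ∀ x : X, ∃ h ∈ L, h x ≤ ψ x ∧ ∀ z, ψ z - ε < h z := by
    intro x
    choose g hgL hgx hgy using hkey x
    set U : X → Set X := fun y => {z | ψ z - ε < g y z} with hU
    have hUopen : ∀ y, IsOpen (U y) :=
      fun y => isOpen_lt (by continuity) (hcont _ (hgL y))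
    have hcover : univ ⊆ ⋃ y, U y := by
      intro z _
      exact mem_iUnion.mpr ⟨z, by simp only [hU, mem_setOf_eq]; linarith [hgy z]⟩
    obtain ⟨t, ht⟩ := isCompact_univ.elim_finite_subcover U hUopen hcover
    have htne : t.Nonempty := by
      obtain ⟨x0⟩ := hX
      obtain ⟨y, hy, _⟩ := mem_iUnion₂.mp (ht (mem_univ x0))
      exact ⟨y, hy⟩
    refine ⟨fun z => t.sup' htne (fun y => g y z), ?_, ?_, ?_⟩
    · have hLmem : t.sup' htne g ∈ L := by
        apply Finset.sup'_induction
        · intro p hp q hq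
          have hpq := hmax p hp q hq
          have e : (fun x => max (p x) (q x)) = p ⊔ q := by
            funext z; simp
          rwa [e] at hpq
        · intro y _; exact hgL y
      have e2 : (fun z => t.sup' htne fun y => g y z) = t.sup' htne g := by
        funext z; exact (Finset.sup'_apply htne g z).symm
      rwa [e2]
    · exact Finset.sup'_le _ _ fun y _ => hgx y
    · intro z
      obtain ⟨y, hy, hzy⟩ := mem_iUnion₂.mp (ht (mem_univ z))
      calc ψ z - ε < g y z := hzy
        _ ≤ t.sup' htne (fun y => g y z) := Finset.le_sup' (fun y => g y z) hy
  -- Step 3b: combine with min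
  choose h hhL hhx hhlow using hstep1
  set V : X → Set X := fun x => {z | h x z < ψ z + ε} with hV
  have hVopen : ∀ x, IsOpen (V x) :=
    fun x => isOpen_lt (hcont _ (hhL x)) (by continuity)
  have hcover : univ ⊆ ⋃ x, V x := by
    intro z _
    exact mem_iUnion.mpr ⟨z, by simp only [hV, mem_setOf_eq]; linarith [hhx z]⟩
  obtain ⟨s, hs⟩ := isCompact_univ.elim_finite_subcover V hVopen hcover
  have hsne : s.Nonempty := by
    obtain ⟨x0⟩ := hX
    obtain ⟨x, hx, _⟩ := mem_iUnion₂.mp (hs (mem_univ x0))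
    exact ⟨x, hx⟩
  refine ⟨fun z => s.inf' hsne (fun x => h x z), ?_, ?_⟩
  · have hLmem : s.inf' hsne h ∈ L := by
      apply Finset.inf'_induction
      · intro p hp q hq
        have hpq := hmin p hp q hq
        have e : (fun x => min (p x) (q x)) = p ⊓ q := by
          funext z; simp
        rwa [e] at hpq
      · intro x _; exact hhL x
    have e2 : (fun z => s.inf' hsne fun x => h x z) = s.inf' hsne h := by
      funext z; exact (Finset.inf'_apply hsne h z).symm
    rwa [e2]
  · intro z
    have hlow : ψ z - ε < s.inf' hsne (fun x => h x z) := by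
      rw [Finset.lt_inf'_iff]
      intro x _
      exact hhlow x z
    have hhigh : s.inf' hsne (fun x => h x z) < ψ z + ε := by
      obtain ⟨x, hx, hzx⟩ := mem_iUnion₂.mp (hs (mem_univ z))
      calc s.inf' hsne (fun x => h x z) ≤ h x z := Finset.inf'_le _ hx
        _ < ψ z + ε := hzx
    rw [abs_le]
    constructor <;> linarith
end
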